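/- Discrete Kallianpur–Streibel formula (two-step case): suppose (X_0, Y_0, X_1, Y_1) has joint law μ(dx_0, dy_0) P(x_0, dx_1) h(x_1, y_0, y_1) dy_1, where h is a jointly measurable nonnegative density in y_1. Then for Lebesgue-almost every (y_0, y_1), the conditional law of X_1 given (Y_0, Y_1) = (y_0, y_1) is given by the normalized measure Π(dx_1) = π(dx_1)/π(E) with π(dx_1) = ∫_{x_0} h(x_1, y_0, y_1) P(x_0, dx_1) μ(dx_0 | Y_0 = y_0), whenever π(E) ∈ (0, ∞). That is, for all bounded measurable f, E[f(X_1) | Y_0, Y_1] = (∫ f dπ)/π(E) almost surely. -/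

import Mathlib

open MeasureTheory ProbabilityTheory
open scoped ENNReal

namespace KSAux

variable {E F : Type*} [MeasurableSpace E] [MeasurableSpace F]

/-- unnormalized filter functional -/
noncomputable def KSN (κ : Kernel E E) (ρ : Kernel F E) (h : E → F → F → ℝ)
    (φ : E → ℝ≥0∞) (q : F × F) : ℝ≥0∞ :=
  ∫⁻ x0, ∫⁻ x1, φ x1 * ENNReal.ofReal (h x1 q.1 q.2) ∂(κ x0) ∂(ρ q.1)

lemma KSN_meas (κ : Kernel E E) [IsSFiniteKernel κ] (ρ : Kernel F E) [IsSFiniteKernel ρ]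
    {h : E → F → F → ℝ} (hh : Measurable fun p : E × F × F => h p.1 p.2.1 p.2.2)
    {φ : E → ℝ≥0∞} (hφ : Measurable φ) :
    Measurable (KSN κ ρ h φ) := by
  have hinner : Measurable fun r : (F × F) × E =>
      ∫⁻ x1, φ x1 * ENNReal.ofReal (h x1 r.1.1 r.1.2) ∂(κ r.2) := by
    have := Measurable.lintegral_kernel_prod_right'
      (κ := κ.comap (Prod.snd : (F × F) × E → E) measurable_snd)
      (f := fun z : ((F × F) × E) × E => φ z.2 * ENNReal.ofReal (h z.2 z.1.1.1 z.1.1.2))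
      ((hφ.comp measurable_snd).mul
        (ENNReal.measurable_ofReal.comp (hh.comp
          (measurable_snd.prodMk
            (measurable_fst.fst.fst.prodMk measurable_fst.fst.snd)))))
    simpa [Kernel.comap_apply] using this
  have := Measurable.lintegral_kernel_prod_right'
    (κ := ρ.comap (fun q : F × F => q.1) measurable_fst)
    (f := fun r : (F × F) × E =>
      ∫⁻ x1, φ x1 * ENNReal.ofReal (h x1 r.1.1 r.1.2) ∂(κ r.2)) hinner
  unfold KSN
  simpa [Kernel.comap_apply] using this

lemma KSN_le (κ : Kernel E E) (ρ : Kernel F E) (h : E → F → F → ℝ)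
    {φ : E → ℝ≥0∞} {Cf : ℝ} (hφ : ∀ x, φ x ≤ ENNReal.ofReal Cf) (q : F × F) :
    KSN κ ρ h φ q ≤ ENNReal.ofReal Cf * KSN κ ρ h (fun _ => 1) q := by
  unfold KSN
  calc ∫⁻ x0, ∫⁻ x1, φ x1 * ENNReal.ofReal (h x1 q.1 q.2) ∂(κ x0) ∂(ρ q.1)
      ≤ ∫⁻ x0, ∫⁻ x1, ENNReal.ofReal Cf *
          ((fun _ : E => (1:ℝ≥0∞)) x1 * ENNReal.ofReal (h x1 q.1 q.2)) ∂(κ x0) ∂(ρ q.1) := by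
        refine lintegral_mono fun x0 => lintegral_mono fun x1 => ?_
        simpa using mul_le_mul_left (hφ x1) _
    _ = ∫⁻ x0, ENNReal.ofReal Cf *
          ∫⁻ x1, (fun _ : E => (1:ℝ≥0∞)) x1 * ENNReal.ofReal (h x1 q.1 q.2) ∂(κ x0) ∂(ρ q.1) := by
        simp_rw [lintegral_const_mul' _ _ ENNReal.ofReal_ne_top]
    _ = ENNReal.ofReal Cf * ∫⁻ x0, ∫⁻ x1,
          (fun _ : E => (1:ℝ≥0∞)) x1 * ENNReal.ofReal (h x1 q.1 q.2) ∂(κ x0) ∂(ρ q.1) :=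
        lintegral_const_mul' _ _ ENNReal.ofReal_ne_top

lemma KS_key
    {Ω : Type*} [MeasurableSpace Ω] (Pr : Measure Ω) [IsProbabilityMeasure Pr]
    (lam : Measure F) [SigmaFinite lam]
    (X0 X1 : Ω → E) (Y0 Y1 : Ω → F)
    (hX0 : Measurable X0) (hX1 : Measurable X1)
    (hY0 : Measurable Y0) (hY1 : Measurable Y1)
    (κ : Kernel E E) [IsMarkovKernel κ]
    {h : E → F → F → ℝ} (hh : Measurable fun p : E × F × F => h p.1 p.2.1 p.2.2)
    (ρ : Kernel F E) [IsMarkovKernel ρ]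
    (hρ : (Measure.map Y0 Pr).compProd ρ = Measure.map (fun ω => (Y0 ω, X0 ω)) Pr)
    (hjoint : ∀ g : E × F × E × F → ℝ≥0∞,
      Measurable g →
      ∫⁻ ω, g (X0 ω, Y0 ω, X1 ω, Y1 ω) ∂Pr
        = ∫⁻ p, (∫⁻ x1, ∫⁻ y1,
            g (p.1, p.2, x1, y1) * ENNReal.ofReal (h x1 p.2 y1) ∂lam ∂(κ p.1))
          ∂(Measure.map (fun ω => (X0 ω, Y0 ω)) Pr))
    {G : F × F → ℝ≥0∞} (hG : Measurable G) {φ : E → ℝ≥0∞} (hφ : Measurable φ) :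
    ∫⁻ ω, G (Y0 ω, Y1 ω) * φ (X1 ω) ∂Pr
      = ∫⁻ q, G q * KSN κ ρ h φ q ∂((Measure.map Y0 Pr).prod lam) := by
  haveI : IsProbabilityMeasure (Measure.map Y0 Pr) :=
    Measure.isProbabilityMeasure_map hY0.aemeasurable
  have hHm : Measurable fun p : E × F × F => ENNReal.ofReal (h p.1 p.2.1 p.2.2) :=
    ENNReal.measurable_ofReal.comp hh
  -- inner kernel integral, measurable in ((x0, y0), y1)
  have hB : Measurable fun r : (E × F) × F =>
      ∫⁻ x1, φ x1 * ENNReal.ofReal (h x1 r.1.2 r.2) ∂(κ r.1.1) := by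
    have := Measurable.lintegral_kernel_prod_right'
      (κ := κ.comap (fun r : (E × F) × F => r.1.1) measurable_fst.fst)
      (f := fun z : ((E × F) × F) × E =>
        φ z.2 * ENNReal.ofReal (h z.2 z.1.1.2 z.1.2))
      ((hφ.comp measurable_snd).mul (hHm.comp
        (measurable_snd.prodMk
          (measurable_fst.fst.snd.prodMk measurable_fst.snd))))
    simpa [Kernel.comap_apply] using this
  -- the function of p = (x0, y0)
  set Ffun : E × F → ℝ≥0∞ := fun p =>
    ∫⁻ y1, G (p.2, y1) * ∫⁻ x1, φ x1 * ENNReal.ofReal (h x1 p.2 y1) ∂(κ p.1) ∂lam with hFfun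
  have hFm : Measurable Ffun := by
    apply Measurable.lintegral_prod_right'
      (f := fun r : (E × F) × F =>
        G (r.1.2, r.2) * ∫⁻ x1, φ x1 * ENNReal.ofReal (h x1 r.1.2 r.2) ∂(κ r.1.1))
    exact (hG.comp (measurable_fst.snd.prodMk measurable_snd)).mul hB
  have hg : Measurable fun r : E × F × E × F => G (r.2.1, r.2.2.2) * φ r.2.2.1 :=
    (hG.comp (measurable_snd.fst.prodMk measurable_snd.snd.snd)).mul
      (hφ.comp measurable_snd.snd.fst)
  have step1 := hjoint (fun r => G (r.2.1, r.2.2.2) * φ r.2.2.1) hg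
  have step2 : ∀ p : E × F,
      (∫⁻ x1, ∫⁻ y1, G (p.2, y1) * φ x1 * ENNReal.ofReal (h x1 p.2 y1) ∂lam ∂(κ p.1))
        = Ffun p := by
    intro p
    rw [hFfun]
    rw [lintegral_lintegral_swap]
    · refine lintegral_congr fun y1 => ?_
      have hm1 : Measurable fun x1 : E => φ x1 * ENNReal.ofReal (h x1 p.2 y1) := by
        refine hφ.mul (ENNReal.measurable_ofReal.comp ?_)
        exact hh.comp (measurable_id.prodMk (measurable_const.prodMk measurable_const))
      rw [← lintegral_const_mul _ hm1]
      exact lintegral_congr fun x1 => by ring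
    · exact ((hG.comp (measurable_const.prodMk measurable_snd)).mul
        (hφ.comp measurable_fst)).mul (hHm.comp
          (measurable_fst.prodMk
            (measurable_const.prodMk measurable_snd))) |>.aemeasurable
  calc ∫⁻ ω, G (Y0 ω, Y1 ω) * φ (X1 ω) ∂Pr
      = ∫⁻ p, Ffun p ∂(Measure.map (fun ω => (X0 ω, Y0 ω)) Pr) := by
        rw [step1]; exact lintegral_congr step2
    _ = ∫⁻ ω, Ffun (X0 ω, Y0 ω) ∂Pr := lintegral_map hFm (hX0.prodMk hY0)
    _ = ∫⁻ q, Ffun (q.2, q.1) ∂(Measure.map (fun ω => (Y0 ω, X0 ω)) Pr) := by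
        have hm2 : Measurable fun q : F × E => Ffun (q.2, q.1) :=
          hFm.comp (measurable_snd.prodMk measurable_fst)
        rw [lintegral_map hm2 (hY0.prodMk hX0)]
    _ = ∫⁻ q, Ffun (q.2, q.1) ∂((Measure.map Y0 Pr).compProd ρ) := by rw [hρ]
    _ = ∫⁻ y0, ∫⁻ x0, Ffun (x0, y0) ∂(ρ y0) ∂(Measure.map Y0 Pr) :=
        Measure.lintegral_compProd (hFm.comp (measurable_snd.prodMk measurable_fst))
    _ = ∫⁻ y0, ∫⁻ x0, ∫⁻ y1, G (y0, y1) *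
          ∫⁻ x1, φ x1 * ENNReal.ofReal (h x1 y0 y1) ∂(κ x0) ∂lam ∂(ρ y0)
          ∂(Measure.map Y0 Pr) := rfl
    _ = ∫⁻ y0, ∫⁻ y1, G (y0, y1) * KSN κ ρ h φ (y0, y1) ∂lam ∂(Measure.map Y0 Pr) := by
        refine lintegral_congr fun y0 => ?_
        rw [lintegral_lintegral_swap]
        · refine lintegral_congr fun y1 => ?_
          have hm3 : Measurable fun x0 : E =>
              ∫⁻ x1, φ x1 * ENNReal.ofReal (h x1 y0 y1) ∂(κ x0) := by
            have := hB.comp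
              ((measurable_id.prodMk (measurable_const : Measurable fun _ : E => y0)).prodMk
                (measurable_const : Measurable fun _ : E => y1))
            exact this
          simp only [KSN]
          rw [← lintegral_const_mul _ hm3]
        · refine AEMeasurable.mul ?_ ?_
          · exact ((hG.comp (measurable_const.prodMk measurable_snd))).aemeasurable
          · exact (hB.comp ((measurable_fst.prodMk measurable_const).prodMk
              measurable_snd)).aemeasurable
    _ = ∫⁻ q, G q * KSN κ ρ h φ q ∂((Measure.map Y0 Pr).prod lam) := by
        rw [lintegral_prod]
        exact (hG.mul (KSN_meas κ ρ hh hφ)).aemeasurable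

end KSAux

open KSAux in
/-- Discrete Kallianpur–Streibel formula (two-step case): if `(X₀, Y₀, X₁, Y₁)` has joint
law `μ(dx₀,dy₀) P(x₀,dx₁) h(x₁,y₀,y₁) λ(dy₁)`, `ρ` is a conditional law of `X₀` given
`Y₀`, and the normalizing constant is a.s. positive and finite, then the conditional
expectation of any bounded measurable `f(X₁)` given `(Y₀, Y₁)` is the normalized
unnormalized filter `(∫ f dπ)/π(E)` evaluated at `(Y₀, Y₁)`. -/
theorem discrete_kallianpur_streibel_two_step
    {Ω : Type*} [MeasureSpace Ω] (Pr : Measure Ω) [IsProbabilityMeasure Pr]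
    {E F : Type*} [MeasurableSpace E] [StandardBorelSpace E] [Nonempty E]
    [MeasurableSpace F] [StandardBorelSpace F] [Nonempty F]
    (lam : Measure F) [SigmaFinite lam]
    (X0 X1 : Ω → E) (Y0 Y1 : Ω → F)
    (hX0 : Measurable X0) (hX1 : Measurable X1)
    (hY0 : Measurable Y0) (hY1 : Measurable Y1)
    -- the Markov transition kernel of `X`
    (κ : Kernel E E) [IsMarkovKernel κ]
    -- `h` is a jointly measurable nonnegative density in `y₁`
    (h : E → F → F → ℝ)
    (hhmeas : Measurable fun p : E × F × F => h p.1 p.2.1 p.2.2)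
    (hhpos : ∀ x1 y0 y1, 0 ≤ h x1 y0 y1)
    (hhdens : ∀ x1 y0, ∫⁻ y1, ENNReal.ofReal (h x1 y0 y1) ∂lam = 1)
    -- `ρ` is a regular conditional law of `X₀` given `Y₀`
    (ρ : Kernel F E) [IsMarkovKernel ρ]
    (hρ : (Measure.map Y0 Pr).compProd ρ = Measure.map (fun ω => (Y0 ω, X0 ω)) Pr)
    -- the joint law of `(X₀, Y₀, X₁, Y₁)` is `μ(dx₀,dy₀) P(x₀,dx₁) h(x₁,y₀,y₁) λ(dy₁)`
    (hjoint : ∀ g : E × F × E × F → ℝ≥0∞,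
      Measurable g →
      ∫⁻ ω, g (X0 ω, Y0 ω, X1 ω, Y1 ω) ∂Pr
        = ∫⁻ p, (∫⁻ x1, ∫⁻ y1,
            g (p.1, p.2, x1, y1) * ENNReal.ofReal (h x1 p.2 y1) ∂lam ∂(κ p.1))
          ∂(Measure.map (fun ω => (X0 ω, Y0 ω)) Pr))
    -- the normalizing constant `π(E)` lies in `(0, ∞)` almost surely
    (hden : ∀ᵐ ω ∂Pr,
      0 < (∫⁻ x0, ∫⁻ x1, ENNReal.ofReal (h x1 (Y0 ω) (Y1 ω)) ∂(κ x0) ∂(ρ (Y0 ω)))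
      ∧ (∫⁻ x0, ∫⁻ x1, ENNReal.ofReal (h x1 (Y0 ω) (Y1 ω)) ∂(κ x0) ∂(ρ (Y0 ω))) < ⊤)
    (f : E → ℝ) (hf : Measurable f) (hfbdd : ∃ Cf, ∀ x, |f x| ≤ Cf) :
    Pr[fun ω => f (X1 ω) |
        MeasurableSpace.comap (fun ω => (Y0 ω, Y1 ω)) inferInstance]
      =ᵐ[Pr] fun ω =>
        (∫ x0, (∫ x1, f x1 * h x1 (Y0 ω) (Y1 ω) ∂(κ x0)) ∂(ρ (Y0 ω)))
          / (∫ x0, (∫ x1, h x1 (Y0 ω) (Y1 ω) ∂(κ x0)) ∂(ρ (Y0 ω))) := by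
  classical
  obtain ⟨Cf, hCf⟩ := hfbdd
  have hCf0 : 0 ≤ Cf := le_trans (abs_nonneg _) (hCf (Classical.arbitrary E))
  haveI : IsProbabilityMeasure (Measure.map Y0 Pr) :=
    Measure.isProbabilityMeasure_map hY0.aemeasurable
  -- notation
  have hfpm : Measurable fun x : E => ENNReal.ofReal (f x) :=
    ENNReal.measurable_ofReal.comp hf
  have hfmm : Measurable fun x : E => ENNReal.ofReal (-(f x)) :=
    ENNReal.measurable_ofReal.comp hf.neg
  have hNpm : Measurable (KSN κ ρ h fun x => ENNReal.ofReal (f x)) :=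
    KSN_meas κ ρ hhmeas hfpm
  have hNmm : Measurable (KSN κ ρ h fun x => ENNReal.ofReal (-(f x))) :=
    KSN_meas κ ρ hhmeas hfmm
  have hDm : Measurable (KSN κ ρ h fun _ => 1) :=
    KSN_meas κ ρ hhmeas measurable_const
  have hfp_le : ∀ x : E, ENNReal.ofReal (f x) ≤ ENNReal.ofReal Cf := fun x =>
    ENNReal.ofReal_le_ofReal ((le_abs_self _).trans (hCf x))
  have hfm_le : ∀ x : E, ENNReal.ofReal (-(f x)) ≤ ENNReal.ofReal Cf := fun x =>
    ENNReal.ofReal_le_ofReal ((neg_le_abs _).trans (hCf x))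
  have hNp_le := KSN_le κ ρ h hfp_le
  have hNm_le := KSN_le κ ρ h hfm_le
  have key := fun {G : F × F → ℝ≥0∞} (hG : Measurable G) {φ : E → ℝ≥0∞}
    (hφ : Measurable φ) =>
    KS_key Pr lam X0 X1 Y0 Y1 hX0 hX1 hY0 hY1 κ hhmeas ρ hρ hjoint hG hφ
  have hDeq : ∀ y0 y1 : F, KSN κ ρ h (fun _ => 1) (y0, y1)
      = ∫⁻ x0, ∫⁻ x1, ENNReal.ofReal (h x1 y0 y1) ∂(κ x0) ∂(ρ y0) := by
    intro y0 y1; simp [KSN]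
  have hden' : ∀ᵐ ω ∂Pr, 0 < KSN κ ρ h (fun _ => 1) (Y0 ω, Y1 ω)
      ∧ KSN κ ρ h (fun _ => 1) (Y0 ω, Y1 ω) < ⊤ := by
    filter_upwards [hden] with ω hω
    rw [hDeq]; exact hω
  -- total mass
  have hDtot : ∫⁻ q, KSN κ ρ h (fun _ => 1) q ∂((Measure.map Y0 Pr).prod lam) = 1 := by
    have h1 := key (G := fun _ : F × F => 1) measurable_const
      (φ := fun _ : E => 1) measurable_const
    simp only [one_mul] at h1
    rw [← h1]; simp
  have hNp_fin : ∫⁻ q, KSN κ ρ h (fun x => ENNReal.ofReal (f x)) q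
      ∂((Measure.map Y0 Pr).prod lam) ≠ ⊤ := by
    refine ne_top_of_le_ne_top ?_ (lintegral_mono fun q => hNp_le q)
    rw [lintegral_const_mul' _ _ ENNReal.ofReal_ne_top, hDtot, mul_one]
    exact ENNReal.ofReal_ne_top
  have hNm_fin : ∫⁻ q, KSN κ ρ h (fun x => ENNReal.ofReal (-(f x))) q
      ∂((Measure.map Y0 Pr).prod lam) ≠ ⊤ := by
    refine ne_top_of_le_ne_top ?_ (lintegral_mono fun q => hNm_le q)
    rw [lintegral_const_mul' _ _ ENNReal.ofReal_ne_top, hDtot, mul_one]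
    exact ENNReal.ofReal_ne_top
  -- set-lintegral identity
  have hsetl : ∀ (B : Set (F × F)), MeasurableSet B → ∀ (φ : E → ℝ≥0∞), Measurable φ →
      ∫⁻ ω, B.indicator (fun _ => (1:ℝ≥0∞)) (Y0 ω, Y1 ω) * φ (X1 ω) ∂Pr
        = ∫⁻ q in B, KSN κ ρ h φ q ∂((Measure.map Y0 Pr).prod lam) := by
    intro B hB φ hφ
    rw [key (measurable_const.indicator hB) hφ, ← lintegral_indicator hB]
    refine lintegral_congr fun q => ?_
    by_cases hq : q ∈ B <;> simp [hq]
  -- the a.e. dichotomy for the normalizing constant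
  have hSmeas : MeasurableSet {q : F × F |
      ¬ (0 < KSN κ ρ h (fun _ => 1) q ∧ KSN κ ρ h (fun _ => 1) q < ⊤)} := by
    have h1 : MeasurableSet {q : F × F | 0 < KSN κ ρ h (fun _ => 1) q} :=
      measurableSet_lt measurable_const hDm
    have h2 : MeasurableSet {q : F × F | KSN κ ρ h (fun _ => 1) q < ⊤} :=
      measurableSet_lt hDm measurable_const
    have : {q : F × F | ¬ (0 < KSN κ ρ h (fun _ => 1) q ∧ KSN κ ρ h (fun _ => 1) q < ⊤)}
        = ({q : F × F | 0 < KSN κ ρ h (fun _ => 1) q} ∩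
            {q : F × F | KSN κ ρ h (fun _ => 1) q < ⊤})ᶜ := by
      ext q; simp [Set.mem_inter_iff, not_and_or]
    rw [this]
    exact (h1.inter h2).compl
  have hae : ∀ᵐ q ∂((Measure.map Y0 Pr).prod lam),
      KSN κ ρ h (fun _ => 1) q = 0
      ∨ (0 < KSN κ ρ h (fun _ => 1) q ∧ KSN κ ρ h (fun _ => 1) q < ⊤) := by
    set S : Set (F × F) := {q : F × F |
      ¬ (0 < KSN κ ρ h (fun _ => 1) q ∧ KSN κ ρ h (fun _ => 1) q < ⊤)} with hSdef
    have hzero : ∫⁻ q in S, KSN κ ρ h (fun _ => 1) q ∂((Measure.map Y0 Pr).prod lam)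
        = 0 := by
      rw [← hsetl S hSmeas _ measurable_const]
      calc ∫⁻ ω, S.indicator (fun _ => (1:ℝ≥0∞)) (Y0 ω, Y1 ω) * 1 ∂Pr
          = ∫⁻ _ω, (0:ℝ≥0∞) ∂Pr := by
            refine lintegral_congr_ae ?_
            filter_upwards [hden'] with ω hω
            have : (Y0 ω, Y1 ω) ∉ S := by simp [hSdef, hω.1, hω.2.ne]
            simp [Set.indicator_of_notMem this]
        _ = 0 := lintegral_zero
    have hae0 : ∀ᵐ q ∂((Measure.map Y0 Pr).prod lam),
        q ∈ S → KSN κ ρ h (fun _ => 1) q = 0 :=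
      (setLIntegral_eq_zero_iff hSmeas hDm).mp hzero
    filter_upwards [hae0] with q hq
    by_cases hmem : q ∈ S
    · exact Or.inl (hq hmem)
    · have hmem' : ¬ q ∈ S := hmem
      rw [hSdef, Set.mem_setOf_eq, not_not] at hmem'
      exact Or.inr hmem'
  have hDfin : ∀ᵐ q ∂((Measure.map Y0 Pr).prod lam),
      KSN κ ρ h (fun _ => 1) q < ⊤ := by
    filter_upwards [hae] with q hq
    rcases hq with h0 | ⟨_, hlt⟩
    · simp [h0]
    · exact hlt
  -- law of (Y0, Y1)
  have hμY : Measure.map (fun ω => (Y0 ω, Y1 ω)) Pr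
      = ((Measure.map Y0 Pr).prod lam).withDensity (KSN κ ρ h fun _ => 1) := by
    refine Measure.ext fun s hs => ?_
    rw [Measure.map_apply (hY0.prodMk hY1) hs, withDensity_apply _ hs,
      ← hsetl s hs _ measurable_const,
      ← lintegral_indicator_one ((hY0.prodMk hY1) hs)]
    refine lintegral_congr fun ω => ?_
    by_cases hω : (Y0 ω, Y1 ω) ∈ s
    · simp [Set.indicator_apply, Set.mem_preimage, hω]
    · simp [Set.indicator_apply, Set.mem_preimage, hω]
  -- pointwise identification of the Bochner integrals
  have hpoint : ∀ y0 y1 : F, 0 < KSN κ ρ h (fun _ => 1) (y0, y1) →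
      KSN κ ρ h (fun _ => 1) (y0, y1) < ⊤ →
      ((∫ x0, (∫ x1, f x1 * h x1 y0 y1 ∂(κ x0)) ∂(ρ y0))
          = (KSN κ ρ h (fun x => ENNReal.ofReal (f x)) (y0, y1)).toReal
            - (KSN κ ρ h (fun x => ENNReal.ofReal (-(f x))) (y0, y1)).toReal)
        ∧ (∫ x0, (∫ x1, h x1 y0 y1 ∂(κ x0)) ∂(ρ y0))
          = (KSN κ ρ h (fun _ => 1) (y0, y1)).toReal := by
    intro y0 y1 hpos hlt
    have hsec : Measurable fun x1 : E => h x1 y0 y1 :=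
      hhmeas.comp (measurable_id.prodMk (measurable_const.prodMk measurable_const))
    have hAmeas : Measurable fun x0 : E => ∫⁻ x1, ENNReal.ofReal (h x1 y0 y1) ∂(κ x0) :=
      Measurable.lintegral_kernel_prod_right'
        (f := fun z : E × E => ENNReal.ofReal (h z.2 y0 y1))
        (ENNReal.measurable_ofReal.comp (hsec.comp measurable_snd))
    have hDq : ∫⁻ x0, ∫⁻ x1, ENNReal.ofReal (h x1 y0 y1) ∂(κ x0) ∂(ρ y0)
        = KSN κ ρ h (fun _ => 1) (y0, y1) := (hDeq y0 y1).symm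
    have hAae : ∀ᵐ x0 ∂(ρ y0), (∫⁻ x1, ENNReal.ofReal (h x1 y0 y1) ∂(κ x0)) < ⊤ :=
      ae_lt_top hAmeas (by rw [hDq]; exact hlt.ne)
    have hIpm : Measurable fun x0 : E =>
        ∫⁻ x1, ENNReal.ofReal (f x1) * ENNReal.ofReal (h x1 y0 y1) ∂(κ x0) :=
      Measurable.lintegral_kernel_prod_right'
        (f := fun z : E × E => ENNReal.ofReal (f z.2) * ENNReal.ofReal (h z.2 y0 y1))
        ((hfpm.comp measurable_snd).mul
          (ENNReal.measurable_ofReal.comp (hsec.comp measurable_snd)))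
    have hImm : Measurable fun x0 : E =>
        ∫⁻ x1, ENNReal.ofReal (-(f x1)) * ENNReal.ofReal (h x1 y0 y1) ∂(κ x0) :=
      Measurable.lintegral_kernel_prod_right'
        (f := fun z : E × E => ENNReal.ofReal (-(f z.2)) * ENNReal.ofReal (h z.2 y0 y1))
        ((hfmm.comp measurable_snd).mul
          (ENNReal.measurable_ofReal.comp (hsec.comp measurable_snd)))
    have hIp_eq : ∫⁻ x0, (∫⁻ x1, ENNReal.ofReal (f x1) * ENNReal.ofReal (h x1 y0 y1)
        ∂(κ x0)) ∂(ρ y0) = KSN κ ρ h (fun x => ENNReal.ofReal (f x)) (y0, y1) := rfl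
    have hIm_eq : ∫⁻ x0, (∫⁻ x1, ENNReal.ofReal (-(f x1)) * ENNReal.ofReal (h x1 y0 y1)
        ∂(κ x0)) ∂(ρ y0) = KSN κ ρ h (fun x => ENNReal.ofReal (-(f x))) (y0, y1) := rfl
    have hIp_fin : ∫⁻ x0, (∫⁻ x1, ENNReal.ofReal (f x1) * ENNReal.ofReal (h x1 y0 y1)
        ∂(κ x0)) ∂(ρ y0) ≠ ⊤ := by
      rw [hIp_eq]
      exact ne_top_of_le_ne_top
        (ENNReal.mul_ne_top ENNReal.ofReal_ne_top hlt.ne) (hNp_le (y0, y1))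
    have hIm_fin : ∫⁻ x0, (∫⁻ x1, ENNReal.ofReal (-(f x1)) * ENNReal.ofReal (h x1 y0 y1)
        ∂(κ x0)) ∂(ρ y0) ≠ ⊤ := by
      rw [hIm_eq]
      exact ne_top_of_le_ne_top
        (ENNReal.mul_ne_top ENNReal.ofReal_ne_top hlt.ne) (hNm_le (y0, y1))
    constructor
    · have hinner_ae : ∀ᵐ x0 ∂(ρ y0), ∫ x1, f x1 * h x1 y0 y1 ∂(κ x0)
          = (∫⁻ x1, ENNReal.ofReal (f x1) * ENNReal.ofReal (h x1 y0 y1) ∂(κ x0)).toReal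
            - (∫⁻ x1, ENNReal.ofReal (-(f x1)) * ENNReal.ofReal (h x1 y0 y1)
                ∂(κ x0)).toReal := by
        filter_upwards [hAae] with x0 hx0
        have hint_h : Integrable (fun x1 => h x1 y0 y1) (κ x0) := by
          refine ⟨hsec.aestronglyMeasurable, ?_⟩
          rw [hasFiniteIntegral_iff_ofReal (ae_of_all _ fun x1 => hhpos x1 y0 y1)]
          exact hx0
        have hint : Integrable (fun x1 => f x1 * h x1 y0 y1) (κ x0) := by
          refine (hint_h.const_mul Cf).mono ((hf.mul hsec).aestronglyMeasurable)
            (ae_of_all _ fun x1 => ?_)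
          rw [Real.norm_eq_abs, Real.norm_eq_abs, abs_mul]
          calc |f x1| * |h x1 y0 y1| ≤ Cf * |h x1 y0 y1| :=
                mul_le_mul_of_nonneg_right (hCf x1) (abs_nonneg _)
            _ ≤ |Cf| * |h x1 y0 y1| :=
                mul_le_mul_of_nonneg_right (le_abs_self Cf) (abs_nonneg _)
            _ = |Cf * h x1 y0 y1| := (abs_mul _ _).symm
        rw [integral_eq_lintegral_pos_part_sub_lintegral_neg_part hint]
        congr 1
        · congr 1
          refine lintegral_congr fun x1 => ?_
          rw [ENNReal.ofReal_mul' (hhpos x1 y0 y1)]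
        · congr 1
          refine lintegral_congr fun x1 => ?_
          rw [show -(f x1 * h x1 y0 y1) = (-(f x1)) * h x1 y0 y1 by ring,
            ENNReal.ofReal_mul' (hhpos x1 y0 y1)]
      rw [integral_congr_ae hinner_ae,
        integral_sub (integrable_toReal_of_lintegral_ne_top hIpm.aemeasurable hIp_fin)
          (integrable_toReal_of_lintegral_ne_top hImm.aemeasurable hIm_fin),
        integral_toReal hIpm.aemeasurable (ae_lt_top hIpm hIp_fin),
        integral_toReal hImm.aemeasurable (ae_lt_top hImm hIm_fin), hIp_eq, hIm_eq]
    · have hinner : ∀ x0 : E, ∫ x1, h x1 y0 y1 ∂(κ x0)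
          = (∫⁻ x1, ENNReal.ofReal (h x1 y0 y1) ∂(κ x0)).toReal := fun x0 =>
        integral_eq_lintegral_of_nonneg_ae (ae_of_all _ fun x1 => hhpos x1 y0 y1)
          hsec.aestronglyMeasurable
      simp only [hinner]
      rw [integral_toReal hAmeas.aemeasurable hAae, hDq]
  -- the candidate conditional expectation
  set Ψ : F × F → ℝ := fun q =>
    ((KSN κ ρ h (fun x => ENNReal.ofReal (f x)) q).toReal
      - (KSN κ ρ h (fun x => ENNReal.ofReal (-(f x))) q).toReal)
      / (KSN κ ρ h (fun _ => 1) q).toReal with hΨdef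
  have hΨm : Measurable Ψ :=
    (hNpm.ennreal_toReal.sub hNmm.ennreal_toReal).div hDm.ennreal_toReal
  have hΨ_bdd : ∀ q : F × F, 0 < KSN κ ρ h (fun _ => 1) q →
      KSN κ ρ h (fun _ => 1) q < ⊤ → |Ψ q| ≤ Cf := by
    intro q h1 h2
    have hd0 : 0 < (KSN κ ρ h (fun _ => 1) q).toReal := ENNReal.toReal_pos h1.ne' h2.ne
    have ha : (KSN κ ρ h (fun x => ENNReal.ofReal (f x)) q).toReal
        ≤ Cf * (KSN κ ρ h (fun _ => 1) q).toReal := by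
      have h3 := ENNReal.toReal_mono
        (ENNReal.mul_ne_top ENNReal.ofReal_ne_top h2.ne) (hNp_le q)
      rwa [ENNReal.toReal_mul, ENNReal.toReal_ofReal hCf0] at h3
    have hb : (KSN κ ρ h (fun x => ENNReal.ofReal (-(f x))) q).toReal
        ≤ Cf * (KSN κ ρ h (fun _ => 1) q).toReal := by
      have h3 := ENNReal.toReal_mono
        (ENNReal.mul_ne_top ENNReal.ofReal_ne_top h2.ne) (hNm_le q)
      rwa [ENNReal.toReal_mul, ENNReal.toReal_ofReal hCf0] at h3
    rw [hΨdef]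
    simp only
    rw [abs_div, abs_of_pos hd0, div_le_iff₀ hd0]
    refine abs_sub_le_iff.mpr ⟨?_, ?_⟩
    · have := ENNReal.toReal_nonneg
        (a := KSN κ ρ h (fun x => ENNReal.ofReal (-(f x))) q)
      linarith
    · have := ENNReal.toReal_nonneg
        (a := KSN κ ρ h (fun x => ENNReal.ofReal (f x)) q)
      linarith
  -- step I : the stated RHS agrees a.e. with Ψ ∘ (Y0, Y1)
  have hRHS : (fun ω =>
      (∫ x0, (∫ x1, f x1 * h x1 (Y0 ω) (Y1 ω) ∂(κ x0)) ∂(ρ (Y0 ω)))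
        / (∫ x0, (∫ x1, h x1 (Y0 ω) (Y1 ω) ∂(κ x0)) ∂(ρ (Y0 ω))))
      =ᵐ[Pr] fun ω => Ψ (Y0 ω, Y1 ω) := by
    filter_upwards [hden'] with ω hω
    rw [(hpoint _ _ hω.1 hω.2).1, (hpoint _ _ hω.1 hω.2).2]
  -- step II : Ψ ∘ (Y0, Y1) is the conditional expectation
  have hm : MeasurableSpace.comap (fun ω => (Y0 ω, Y1 ω)) inferInstance
      ≤ (inferInstance : MeasurableSpace Ω) := (hY0.prodMk hY1).comap_le
  haveI : SigmaFinite (Pr.trim hm) := by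
    haveI := isFiniteMeasure_trim (μ := Pr) hm
    infer_instance
  have hfint : Integrable (fun ω => f (X1 ω)) Pr :=
    ⟨(hf.comp hX1).aestronglyMeasurable,
      HasFiniteIntegral.of_bounded (C := Cf) (ae_of_all _ fun ω => by
        simpa [Real.norm_eq_abs] using hCf (X1 ω))⟩
  have hg0_int : Integrable (fun ω => Ψ (Y0 ω, Y1 ω)) Pr := by
    refine ⟨(hΨm.comp (hY0.prodMk hY1)).aestronglyMeasurable,
      HasFiniteIntegral.of_bounded (C := Cf) ?_⟩
    filter_upwards [hden'] with ω hω
    simpa [Real.norm_eq_abs] using hΨ_bdd _ hω.1 hω.2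
  have hgm : AEStronglyMeasurable[
      MeasurableSpace.comap (fun ω => (Y0 ω, Y1 ω)) inferInstance]
      (fun ω => Ψ (Y0 ω, Y1 ω)) Pr := by
    refine StronglyMeasurable.aestronglyMeasurable
      (Measurable.stronglyMeasurable ?_)
    exact hΨm.comp (measurable_iff_comap_le.mpr le_rfl)
  have heq : ∀ s : Set Ω,
      MeasurableSet[MeasurableSpace.comap (fun ω => (Y0 ω, Y1 ω)) inferInstance] s →
      Pr s < ⊤ → ∫ x in s, Ψ (Y0 x, Y1 x) ∂Pr = ∫ x in s, f (X1 x) ∂Pr := by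
    rintro s ⟨B, hB, rfl⟩ -
    have hpre : MeasurableSet ((fun ω => (Y0 ω, Y1 ω)) ⁻¹' B) := (hY0.prodMk hY1) hB
    have hR : ∫ x in (fun ω => (Y0 ω, Y1 ω)) ⁻¹' B, f (X1 x) ∂Pr
        = (∫⁻ q in B, KSN κ ρ h (fun x => ENNReal.ofReal (f x)) q
              ∂((Measure.map Y0 Pr).prod lam)).toReal
          - (∫⁻ q in B, KSN κ ρ h (fun x => ENNReal.ofReal (-(f x))) q
              ∂((Measure.map Y0 Pr).prod lam)).toReal := by
      rw [integral_eq_lintegral_pos_part_sub_lintegral_neg_part hfint.restrict]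
      congr 1
      · congr 1
        rw [← hsetl B hB _ hfpm, ← lintegral_indicator hpre]
        refine lintegral_congr fun ω => ?_
        by_cases hω : (Y0 ω, Y1 ω) ∈ B
        · simp [Set.indicator_apply, Set.mem_preimage, hω]
        · simp [Set.indicator_apply, Set.mem_preimage, hω]
      · congr 1
        rw [← hsetl B hB _ hfmm, ← lintegral_indicator hpre]
        refine lintegral_congr fun ω => ?_
        by_cases hω : (Y0 ω, Y1 ω) ∈ B
        · simp [Set.indicator_apply, Set.mem_preimage, hω]
        · simp [Set.indicator_apply, Set.mem_preimage, hω]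
    have hL : ∫ x in (fun ω => (Y0 ω, Y1 ω)) ⁻¹' B, Ψ (Y0 x, Y1 x) ∂Pr
        = (∫⁻ q in B, KSN κ ρ h (fun x => ENNReal.ofReal (f x)) q
              ∂((Measure.map Y0 Pr).prod lam)).toReal
          - (∫⁻ q in B, KSN κ ρ h (fun x => ENNReal.ofReal (-(f x))) q
              ∂((Measure.map Y0 Pr).prod lam)).toReal := by
      have h1 : ∫ x in (fun ω => (Y0 ω, Y1 ω)) ⁻¹' B, Ψ (Y0 x, Y1 x) ∂Pr
          = ∫ q in B, Ψ q ∂(Measure.map (fun ω => (Y0 ω, Y1 ω)) Pr) :=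
        (setIntegral_map hB hΨm.aestronglyMeasurable
          (hY0.prodMk hY1).aemeasurable).symm
      rw [h1, hμY, ← withDensity_congr_ae (coe_toNNReal_ae_eq hDfin),
        setIntegral_withDensity_eq_setIntegral_smul hDm.ennreal_toNNReal _ hB]
      have h2 : ∀ᵐ q ∂(((Measure.map Y0 Pr).prod lam).restrict B),
          (KSN κ ρ h (fun _ => 1) q).toNNReal • Ψ q
            = (KSN κ ρ h (fun x => ENNReal.ofReal (f x)) q).toReal
              - (KSN κ ρ h (fun x => ENNReal.ofReal (-(f x))) q).toReal := by
        filter_upwards [ae_restrict_of_ae hae] with q hq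
        rcases hq with h0 | ⟨h1', h2'⟩
        · have hp0 : KSN κ ρ h (fun x => ENNReal.ofReal (f x)) q = 0 :=
            le_antisymm (by simpa [h0] using hNp_le q) zero_le
          have hm0 : KSN κ ρ h (fun x => ENNReal.ofReal (-(f x))) q = 0 :=
            le_antisymm (by simpa [h0] using hNm_le q) zero_le
          simp [h0, hp0, hm0]
        · have hd0 : (KSN κ ρ h (fun _ => 1) q).toReal ≠ 0 :=
            (ENNReal.toReal_pos h1'.ne' h2'.ne).ne'
          rw [NNReal.smul_def, smul_eq_mul]
          show (KSN κ ρ h (fun _ => 1) q).toReal * Ψ q = _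
          rw [hΨdef]
          simp only
          rw [mul_comm, div_mul_cancel₀ _ hd0]
      rw [integral_congr_ae h2,
        integral_sub
          ((integrable_toReal_of_lintegral_ne_top hNpm.aemeasurable hNp_fin).restrict)
          ((integrable_toReal_of_lintegral_ne_top hNmm.aemeasurable hNm_fin).restrict),
        integral_toReal hNpm.aemeasurable.restrict
          (ae_restrict_of_ae (ae_lt_top hNpm hNp_fin)),
        integral_toReal hNmm.aemeasurable.restrict
          (ae_restrict_of_ae (ae_lt_top hNmm hNm_fin))]
    rw [hL, hR]
  have hcond := ae_eq_condExp_of_forall_setIntegral_eq (μ := Pr) hm hfint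
    (fun s _ _ => hg0_int.integrableOn) heq hgm
  exact hcond.symm.trans hRHS.symm
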